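/- Let H, W, q be positive integers with W \ge 2 and q \in (W/2, W], and let p₁ be a prime with p₁ > W and H \ge p₁ W^3. Then for every configuration 𝐧₁ = (n₁,k₁,j₁), \#A_{𝐧₁,p₁} \le 4 \cdot p₁^{−1} \cdot W^{−3} \cdot H; in particular, for every configuration 𝐧₂ and every prime p₂, \#A_{𝐧₁,𝐧₂,p₁,p₂} \le 4 \cdot p₁^{−1} \cdot W^{−3} \cdot H. -/

import Mathlib

open Finset

noncomputable def Aprog (H W q : ℕ) (c : ℕ × ℕ × ℕ) (p : ℕ) : Finset ℕ :=
  (Finset.Icc 1 (c.1 + H)).filter (fun l =>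
    ((c.2.1 : ℝ) - 1) * H / (W : ℝ) ^ 2 < ((p * l : ℕ) : ℝ) - (c.1 : ℝ) ∧
    ((p * l : ℕ) : ℝ) - (c.1 : ℝ) ≤ (c.2.1 : ℝ) * H / (W : ℝ) ^ 2 ∧
    (p * l) % q = c.2.2)

noncomputable def Ainter (H W q : ℕ) (c₁ c₂ : ℕ × ℕ × ℕ) (p₁ p₂ : ℕ) : Finset ℕ :=
  Aprog H W q c₁ p₁ ∩ Aprog H W q c₂ p₂

theorem stmt12 (H W q p₁ : ℕ) (hH : 0 < H) (hW : 2 ≤ W)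
    (hq1 : (W : ℝ) / 2 < (q : ℝ)) (hq2 : q ≤ W)
    (hp : p₁.Prime) (hpW : W < p₁) (hHp : p₁ * W ^ 3 ≤ H)
    (c₁ : ℕ × ℕ × ℕ) (hk1 : 1 ≤ c₁.2.1) (hk2 : c₁.2.1 ≤ W ^ 2) (hj : c₁.2.2 < q) :
    ((Aprog H W q c₁ p₁).card : ℝ) ≤ 4 * (p₁ : ℝ)⁻¹ * ((W : ℝ) ^ 3)⁻¹ * H ∧
      ∀ (c₂ : ℕ × ℕ × ℕ) (p₂ : ℕ), p₂.Prime →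
        ((Ainter H W q c₁ c₂ p₁ p₂).card : ℝ)
          ≤ 4 * (p₁ : ℝ)⁻¹ * ((W : ℝ) ^ 3)⁻¹ * H := by
  obtain ⟨n, k, j⟩ := c₁
  have hWr : (2:ℝ) ≤ W := by exact_mod_cast hW
  have hq0 : 0 < q := by
    rcases Nat.eq_zero_or_pos q with h | h
    · subst h; norm_num at hq1; linarith
    · exact h
  have hp0 : 0 < p₁ := hp.pos
  have main : ((Aprog H W q (n, k, j) p₁).card : ℝ)
      ≤ 4 * (p₁ : ℝ)⁻¹ * ((W : ℝ) ^ 3)⁻¹ * H := by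
    set A := Aprog H W q (n, k, j) p₁ with hAdef
    rcases A.eq_empty_or_nonempty with h | h
    · rw [h]; simp; positivity
    · set l₀ := A.min' h with hl₀def
      have hl₀ : l₀ ∈ A := A.min'_mem h
      have hmem : ∀ l ∈ A,
          ((k : ℝ) - 1) * H / (W : ℝ) ^ 2 < ((p₁ * l : ℕ) : ℝ) - n ∧
          ((p₁ * l : ℕ) : ℝ) - n ≤ (k : ℝ) * H / (W : ℝ) ^ 2 ∧
          (p₁ * l) % q = j := by
        intro l hl
        have := (Finset.mem_filter.mp hl).2
        exact this
      have hcop : Nat.Coprime q p₁ := by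
        have : ¬ p₁ ∣ q := fun hd => by
          have := Nat.le_of_dvd hq0 hd; omega
        exact (hp.coprime_iff_not_dvd.mpr this).symm
      have key : ∀ l ∈ A, q ∣ (l - l₀) ∧ p₁ * (l - l₀) * W ^ 2 ≤ H := by
        intro l hl
        have hll₀ : l₀ ≤ l := A.min'_le l hl
        obtain ⟨h1, h2, h3⟩ := hmem l hl
        obtain ⟨g1, g2, g3⟩ := hmem l₀ hl₀
        -- divisibility
        have hmod : p₁ * l₀ ≡ p₁ * l [MOD q] := by
          unfold Nat.ModEq; rw [h3, g3]
        have hdvd : q ∣ p₁ * l - p₁ * l₀ :=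
          (Nat.modEq_iff_dvd' (Nat.mul_le_mul_left _ hll₀)).mp hmod
        rw [← Nat.mul_sub] at hdvd
        have hqd : q ∣ (l - l₀) := hcop.dvd_of_dvd_mul_left hdvd
        refine ⟨hqd, ?_⟩
        -- size
        have hreal : ((p₁ * l : ℕ) : ℝ) - ((p₁ * l₀ : ℕ) : ℝ) < (H : ℝ) / (W : ℝ) ^ 2 := by
          have : ((k:ℝ)) * H / (W : ℝ) ^ 2 - ((k : ℝ) - 1) * H / (W : ℝ) ^ 2
              = (H : ℝ) / (W : ℝ) ^ 2 := by ring
          linarith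
        have hWpos : (0:ℝ) < (W : ℝ) ^ 2 := by positivity
        have hlt : ((p₁ * (l - l₀) * W ^ 2 : ℕ) : ℝ) < (H : ℝ) := by
          push_cast [Nat.mul_sub, Nat.sub_le_iff_le_add]
          push_cast [Nat.cast_sub (Nat.mul_le_mul_left p₁ hll₀)]
          rw [← lt_div_iff₀ hWpos]
          convert hreal using 2 <;> push_cast <;> rfl
        exact le_of_lt (by exact_mod_cast hlt)
      have hcard : A.card ≤ H / (p₁ * q * W ^ 2) + 1 := by
        have := Finset.card_le_card_of_injOn (fun l => (l - l₀) / q)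
          (s := A) (t := Finset.range (H / (p₁ * q * W ^ 2) + 1))
          (fun l hl => by
            obtain ⟨hqd, hsz⟩ := key l hl
            obtain ⟨t, ht⟩ := hqd
            show (l - l₀) / q ∈ Finset.range (H / (p₁ * q * W ^ 2) + 1)
            rw [Finset.mem_range, ht, Nat.mul_div_cancel_left _ hq0]
            have : p₁ * q * W ^ 2 * t ≤ H := by
              calc p₁ * q * W ^ 2 * t = p₁ * (q * t) * W ^ 2 := by ring
              _ ≤ H := by rw [← ht]; exact hsz
            have := Nat.le_div_iff_mul_le (by positivity) |>.mpr
              (by linarith [this] : t * (p₁ * q * W ^ 2) ≤ H)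
            omega)
          (fun a ha b hb hab => by
            obtain ⟨hqa, _⟩ := key a ha
            obtain ⟨hqb, _⟩ := key b hb
            have ha' := A.min'_le a ha
            have hb' := A.min'_le b hb
            have e1 : q * ((a - l₀) / q) = a - l₀ := Nat.mul_div_cancel' hqa
            have e2 : q * ((b - l₀) / q) = b - l₀ := Nat.mul_div_cancel' hqb
            simp only at hab
            rw [hab] at e1
            omega)
        simpa using this
      -- final real estimate
      have hcast : ((H / (p₁ * q * W ^ 2) : ℕ) : ℝ) ≤ (H : ℝ) / ((p₁ : ℝ) * q * (W : ℝ) ^ 2) := by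
        have := Nat.cast_div_le (α := ℝ) (m := H) (n := p₁ * q * W ^ 2)
        push_cast at this
        exact this
      have hP : (0:ℝ) < p₁ := by exact_mod_cast hp0
      have hQ : (0:ℝ) < q := by exact_mod_cast hq0
      have hWp : (0:ℝ) < W := by linarith
      have hHr : ((p₁:ℝ)) * (W:ℝ) ^ 3 ≤ H := by exact_mod_cast hHp
      have hfin : (H : ℝ) / ((p₁ : ℝ) * q * (W : ℝ) ^ 2) + 1
          ≤ 4 * (p₁ : ℝ)⁻¹ * ((W : ℝ) ^ 3)⁻¹ * H := by
        have hrw : 4 * (p₁ : ℝ)⁻¹ * ((W : ℝ) ^ 3)⁻¹ * H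
            = 4 * H / ((p₁:ℝ) * (W:ℝ)^3) := by field_simp
        rw [hrw, div_add' _ _ _ (by positivity), div_le_div_iff₀ (by positivity) (by positivity)]
        nlinarith [mul_pos hP (mul_pos hQ (pow_pos hWp 2)),
          mul_nonneg (mul_nonneg (by positivity : (0:ℝ) ≤ (H:ℝ)) hP.le)
            (mul_nonneg hQ.le (pow_pos hWp 2).le),
          mul_le_mul_of_nonneg_right hHr (mul_nonneg (mul_nonneg hP.le hQ.le) (pow_pos hWp 2).le),
          mul_le_mul_of_nonneg_right (show (W:ℝ) ≤ 2 * q by linarith)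
            (show (0:ℝ) ≤ (H:ℝ) * p₁ * (W:ℝ)^2 by positivity)]
      calc (A.card : ℝ) ≤ ((H / (p₁ * q * W ^ 2) + 1 : ℕ) : ℝ) := by exact_mod_cast hcard
        _ ≤ (H : ℝ) / ((p₁ : ℝ) * q * (W : ℝ) ^ 2) + 1 := by push_cast; linarith [hcast]
        _ ≤ _ := hfin
  refine ⟨main, fun c₂ p₂ _ => ?_⟩
  calc ((Ainter H W q (n, k, j) c₂ p₁ p₂).card : ℝ)
      ≤ ((Aprog H W q (n, k, j) p₁).card : ℝ) := by
        exact_mod_cast Finset.card_le_card (Finset.inter_subset_left)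
    _ ≤ _ := main
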